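/- For all real x ≥ 285967, (x + ln(x)^2)/(ln(x) - 1 - 1/ln(x)) < x/(ln(x) - 1 - 1/ln(x) - 1/ln(x)^2). -/

import Mathlib

open Real

lemma exp12_lb : (2.7182818283:ℝ)^12 ≤ Real.exp 12 := by
  have h : Real.exp 12 = Real.exp 1 ^ 12 := by
    rw [← Real.exp_nat_mul]; norm_num
  rw [h]
  exact pow_le_pow_left₀ (by norm_num) (le_of_lt Real.exp_one_gt_d9) 12

lemma exp12_ub : Real.exp 12 ≤ (2.7182818286:ℝ)^12 := by
  have h : Real.exp 12 = Real.exp 1 ^ 12 := by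
    rw [← Real.exp_nat_mul]; norm_num
  rw [h]
  exact pow_le_pow_left₀ (Real.exp_pos 1).le (le_of_lt Real.exp_one_lt_d9) 12

lemma taylor_poly_lemma (t : ℝ) (ht : (0.5636328:ℝ) ≤ t) :
    (12+t)^5 - (12+t)^4 - (12+t)^3 - (12+t)^2 <
      (2.7182818283:ℝ)^12 * (1 + t + t^2/2 + t^3/6 + t^4/24 + t^5/120 + t^6/720
        + t^7/5040 + t^8/40320 + t^9/362880) := by
  have hu : (0:ℝ) ≤ t - 0.5636328 := by linarith
  nlinarith [pow_nonneg hu 2, pow_nonneg hu 3, pow_nonneg hu 4, pow_nonneg hu 5,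
    pow_nonneg hu 6, pow_nonneg hu 7, pow_nonneg hu 8, pow_nonneg hu 9]

theorem rational_log_inequality (x : ℝ) (hx : 285967 ≤ x) :
    (x + Real.log x ^ 2) / (Real.log x - 1 - 1 / Real.log x) <
      x / (Real.log x - 1 - 1 / Real.log x - 1 / Real.log x ^ 2) := by
  have hx0 : (0:ℝ) < x := by linarith
  set L := Real.log x with hLdef
  have hxL : Real.exp L = x := Real.exp_log hx0
  have hL12 : (12:ℝ) ≤ L := by
    have h1 : Real.exp 12 ≤ Real.exp L := by
      rw [hxL]
      calc Real.exp 12 ≤ (2.7182818286:ℝ)^12 := exp12_ub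
        _ ≤ 285967 := by norm_num
        _ ≤ x := hx
    exact Real.exp_le_exp.mp h1
  have hkey : L^5 - L^4 - L^3 - L^2 < x := by
    by_cases hs : L ≤ 12.5636328
    · have h1 : L^5 - L^4 - L^3 - L^2 < 285967 := by
        nlinarith [sq_nonneg (L - 12), sq_nonneg (12.5636328 - L),
          mul_nonneg (sub_nonneg.mpr hs) (sub_nonneg.mpr hL12),
          mul_nonneg (mul_nonneg (sub_nonneg.mpr hs) (sub_nonneg.mpr hL12)) (sub_nonneg.mpr hL12),
          mul_nonneg (sub_nonneg.mpr hs) (sq_nonneg (L-12))]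
      linarith
    · push_neg at hs
      set t := L - 12 with htdef
      have ht : (0.5636328:ℝ) ≤ t := by simp [htdef]; linarith
      have ht0 : (0:ℝ) ≤ t := by linarith
      have hsum : (1:ℝ) + t + t^2/2 + t^3/6 + t^4/24 + t^5/120 + t^6/720
          + t^7/5040 + t^8/40320 + t^9/362880 ≤ Real.exp t := by
        have := Real.sum_le_exp_of_nonneg ht0 10
        simp [Finset.sum_range_succ, Nat.factorial] at this
        convert this using 1
      have hexp : Real.exp L = Real.exp 12 * Real.exp t := by
        rw [← Real.exp_add]; ring_nf; congr 1; rw [htdef]; ring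
      have h2 : (2.7182818283:ℝ)^12 * (1 + t + t^2/2 + t^3/6 + t^4/24 + t^5/120 + t^6/720
          + t^7/5040 + t^8/40320 + t^9/362880) ≤ x := by
        rw [← hxL, hexp]
        have hE0 : (0:ℝ) ≤ (2.7182818283:ℝ)^12 := by positivity
        have hT0 : (0:ℝ) ≤ 1 + t + t^2/2 + t^3/6 + t^4/24 + t^5/120 + t^6/720
            + t^7/5040 + t^8/40320 + t^9/362880 := by positivity
        exact mul_le_mul exp12_lb hsum hT0 (Real.exp_pos 12).le
      have h3 := taylor_poly_lemma t ht
      have hLt : L = 12 + t := by rw [htdef]; ring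
      rw [hLt]
      exact h3.trans_le h2
  have hLpos : (0:ℝ) < L := by linarith
  have hLinv : 1/L ≤ 1/12 := by
    apply one_div_le_one_div_of_le <;> norm_num <;> linarith
  have hL2pos : (0:ℝ) < L^2 := by positivity
  have hL2inv : 1/L^2 ≤ 1/144 := by
    apply one_div_le_one_div_of_le
    · norm_num
    · nlinarith
  have hd1 : (0:ℝ) < L - 1 - 1/L := by linarith
  have hd2 : (0:ℝ) < L - 1 - 1/L - 1/L^2 := by linarith
  rw [div_lt_div_iff₀ hd1 hd2]
  have hLne : L ≠ 0 := ne_of_gt hLpos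
  have expand : x * (L - 1 - 1/L) - (x + L^2) * (L - 1 - 1/L - 1/L^2)
      = (x - (L^5 - L^4 - L^3 - L^2))/L^2 := by
    field_simp
    ring
  have hpos : (0:ℝ) < (x - (L^5 - L^4 - L^3 - L^2))/L^2 := by
    apply div_pos _ hL2pos
    linarith
  linarith
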